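/- arXiv:1605.02577 — 6 statements merged into one kernel-verified Lean document; each statement's English description precedes it below -/
import Mathlib

section
/- Under the moving-frame hypotheses, the angle function θ(t) = arccos ⟨N(t), h⟩ is differentiable and its derivative satisfies θ'(t₀) = ⟨N'(t₀), T⊥(t₀)⟩ at every t₀ (equivalently, in the paper's notation, D_V θ = −II(V, T⊥)). -/
open scoped InnerProductSpace
open Real

/-- Cross product on ℝ³ (Euclidean space). -/
noncomputable def cross3 (a b : EuclideanSpace ℝ (Fin 3)) : EuclideanSpace ℝ (Fin 3) :=
  (WithLp.equiv 2 (Fin 3 → ℝ)).symm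
    ![a 1 * b 2 - a 2 * b 1, a 2 * b 0 - a 0 * b 2, a 0 * b 1 - a 1 * b 0]

lemma cross3_triple (a b v : EuclideanSpace ℝ (Fin 3)) :
    ⟪v, cross3 a (cross3 a b)⟫_ℝ = ⟪a,b⟫_ℝ * ⟪v,a⟫_ℝ - ⟪a,a⟫_ℝ * ⟪v,b⟫_ℝ := by
  simp [cross3, PiLp.inner_apply, Fin.sum_univ_three, WithLp.equiv_symm_apply,
    RCLike.inner_apply, conj_trivial, EuclideanSpace.norm_sq_eq, Real.norm_eq_abs, sq_abs]
  ring

lemma cross3_smul (a b : EuclideanSpace ℝ (Fin 3)) (s : ℝ) :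
    cross3 a (s • b) = s • cross3 a b := by
  ext i
  fin_cases i <;>
    simp [cross3, WithLp.equiv_symm_apply, PiLp.smul_apply, smul_eq_mul] <;> ring

/-- along a differentiable curve of unit normals N(t), the angle
θ(t) = arccos⟨N(t), h⟩ is differentiable with θ'(t₀) = ⟨N'(t₀), Tperp(t₀)⟩
(i.e., D_V θ = −II(V, Tperp)). -/
theorem deriv_angle_eq
    (h : EuclideanSpace ℝ (Fin 3)) (hh : ‖h‖ = 1)
    (N : ℝ → EuclideanSpace ℝ (Fin 3)) (hND : Differentiable ℝ N)
    (hNu : ∀ t, ‖N t‖ = 1) (hNh : ∀ t, |⟪N t, h⟫_ℝ| < 1)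
    (θ : ℝ → ℝ) (hθ : ∀ t, θ t = Real.arccos ⟪N t, h⟫_ℝ)
    (T₀ : ℝ → EuclideanSpace ℝ (Fin 3))
    (hT₀ : ∀ t, T₀ t = (Real.sin (θ t))⁻¹ • cross3 (N t) h)
    (Tperp : ℝ → EuclideanSpace ℝ (Fin 3))
    (hTp : ∀ t, Tperp t = cross3 (N t) (T₀ t)) :
    Differentiable ℝ θ ∧ ∀ t₀, deriv θ t₀ = ⟪deriv N t₀, Tperp t₀⟫_ℝ := by
  have hθfun : θ = fun t => Real.arccos ⟪N t, h⟫_ℝ := funext hθ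
  -- derivative facts at each point
  have key : ∀ t₀ : ℝ, HasDerivAt θ (⟪deriv N t₀, Tperp t₀⟫_ℝ) t₀ := by
    intro t₀
    set c : ℝ := ⟪N t₀, h⟫_ℝ with hc
    have hc1 : c ≠ 1 := fun e => absurd (hNh t₀) (by rw [← hc, e]; simp)
    have hcm1 : c ≠ -1 := fun e => absurd (hNh t₀) (by rw [← hc, e]; simp)
    have hc2 : 1 - c ^ 2 > 0 := by
      have := hNh t₀
      rw [← hc] at this
      nlinarith [abs_nonneg c, sq_abs c, abs_lt.mp this]
    have hs : Real.sqrt (1 - c ^ 2) > 0 := Real.sqrt_pos.mpr hc2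
    have hNd : HasDerivAt N (deriv N t₀) t₀ := (hND t₀).hasDerivAt
    have hinner : HasDerivAt (fun t => ⟪N t, h⟫_ℝ)
        (⟪N t₀, (0 : EuclideanSpace ℝ (Fin 3))⟫_ℝ + ⟪deriv N t₀, h⟫_ℝ) t₀ :=
      hNd.inner ℝ (hasDerivAt_const t₀ h)
    simp only [inner_zero_right, zero_add] at hinner
    have harc : HasDerivAt θ (-(1 / Real.sqrt (1 - c ^ 2)) * ⟪deriv N t₀, h⟫_ℝ) t₀ := by
      rw [hθfun]
      exact (Real.hasDerivAt_arccos hcm1 hc1).comp (h := fun t => ⟪N t, h⟫_ℝ) t₀ hinner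
    -- ⟨N', N⟩ = 0
    have hNN : ⟪deriv N t₀, N t₀⟫_ℝ = 0 := by
      have h1 : HasDerivAt (fun t => ⟪N t, N t⟫_ℝ)
          (⟪N t₀, deriv N t₀⟫_ℝ + ⟪deriv N t₀, N t₀⟫_ℝ) t₀ := hNd.inner ℝ hNd
      have h2 : (fun t => ⟪N t, N t⟫_ℝ) = fun _ => (1 : ℝ) := by
        funext t
        rw [real_inner_self_eq_norm_sq, hNu t]; norm_num
      rw [h2] at h1
      have h3 := h1.unique (hasDerivAt_const t₀ 1)
      have h4 := real_inner_comm (N t₀) (deriv N t₀)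
      linarith
    -- sin θ t₀
    have hsin : Real.sin (θ t₀) = Real.sqrt (1 - c ^ 2) := by
      rw [hθ t₀, Real.sin_arccos]
    -- compute the target inner product
    have hval : ⟪deriv N t₀, Tperp t₀⟫_ℝ = -(1 / Real.sqrt (1 - c ^ 2)) * ⟪deriv N t₀, h⟫_ℝ := by
      rw [hTp, hT₀, cross3_smul, real_inner_smul_right, cross3_triple, hNN,
        real_inner_self_eq_norm_sq, hNu, hsin]
      field_simp
      ring
    rw [hval]
    exact harc
  exact ⟨fun t => (key t).differentiableAt, fun t₀ => (key t₀).deriv⟩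
end

section
/- Under the moving-frame hypotheses, the horizontal normal n(t) is differentiable and its derivative satisfies n'(t₀) = (⟨N'(t₀), T₀(t₀)⟩ / sin θ(t₀)) · T₀(t₀) at every t₀ (equivalently, in the paper's notation, D_V n = −(II(V, T₀)/sin θ) T₀). -/
open scoped InnerProductSpace
open Real

/-- the horizontal normal n(t) is differentiable with
n'(t₀) = (⟨N'(t₀), T₀(t₀)⟩ / sin θ(t₀)) · T₀(t₀)
(i.e., D_V n = −(II(V, T₀)/sin θ) T₀). -/
theorem deriv_horizontal_normal_eq
    (h : EuclideanSpace ℝ (Fin 3)) (hh : ‖h‖ = 1)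
    (N : ℝ → EuclideanSpace ℝ (Fin 3)) (hND : Differentiable ℝ N)
    (hNu : ∀ t, ‖N t‖ = 1) (hNh : ∀ t, |⟪N t, h⟫_ℝ| < 1)
    (θ : ℝ → ℝ) (hθ : ∀ t, θ t = Real.arccos ⟪N t, h⟫_ℝ)
    (T₀ : ℝ → EuclideanSpace ℝ (Fin 3))
    (hT₀ : ∀ t, T₀ t = (Real.sin (θ t))⁻¹ • cross3 (N t) h)
    (Tperp : ℝ → EuclideanSpace ℝ (Fin 3))
    (hTp : ∀ t, Tperp t = cross3 (N t) (T₀ t))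
    (n : ℝ → EuclideanSpace ℝ (Fin 3))
    (hn : ∀ t, n t = (Real.sin (θ t))⁻¹ • (N t - Real.cos (θ t) • h)) :
    Differentiable ℝ n ∧
    ∀ t₀, deriv n t₀ = (⟪deriv N t₀, T₀ t₀⟫_ℝ / Real.sin (θ t₀)) • T₀ t₀ := by
  have hcos : ∀ t, Real.cos (θ t) = ⟪N t, h⟫_ℝ := fun t => by
    rw [hθ]; exact Real.cos_arccos (abs_le.mp (hNh t).le).1 (abs_le.mp (hNh t).le).2
  have hsin : ∀ t, Real.sin (θ t) = Real.sqrt (1 - ⟪N t, h⟫_ℝ ^ 2) := fun t => by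
    rw [hθ, Real.sin_arccos]
  have h1c : ∀ t, 0 < 1 - ⟪N t, h⟫_ℝ ^ 2 := fun t => by
    have h1 := hNh t
    have h2 : ⟪N t, h⟫_ℝ ^ 2 < 1 := by
      rw [← one_pow (M := ℝ) 2]
      exact sq_lt_sq' (neg_lt_of_abs_lt h1) (lt_of_abs_lt h1)
    linarith
  have hspos : ∀ t, 0 < Real.sin (θ t) := fun t => by
    rw [hsin]; exact Real.sqrt_pos.mpr (h1c t)
  have hs2 : ∀ t, Real.sin (θ t) ^ 2 = 1 - ⟪N t, h⟫_ℝ ^ 2 := fun t => by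
    rw [hsin]; exact Real.sq_sqrt (h1c t).le
  have hcD : ∀ t₀, HasDerivAt (fun t => ⟪N t, h⟫_ℝ) ⟪deriv N t₀, h⟫_ℝ t₀ := fun t₀ => by
    simpa using HasDerivAt.inner ℝ (hND t₀).hasDerivAt (hasDerivAt_const t₀ h)
  have hNN : ∀ t₀, ⟪deriv N t₀, N t₀⟫_ℝ = 0 := by
    intro t₀
    have h1 : HasDerivAt (fun t => ⟪N t, N t⟫_ℝ)
        (⟪N t₀, deriv N t₀⟫_ℝ + ⟪deriv N t₀, N t₀⟫_ℝ) t₀ :=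
      HasDerivAt.inner ℝ (hND t₀).hasDerivAt (hND t₀).hasDerivAt
    have h2 : (fun t => ⟪N t, N t⟫_ℝ) = fun _ => (1 : ℝ) := by
      funext t
      rw [real_inner_self_eq_norm_sq, hNu t]; norm_num
    rw [h2] at h1
    have h3 := (hasDerivAt_const t₀ (1 : ℝ)).unique h1
    rw [real_inner_comm (deriv N t₀) (N t₀)] at h3
    linarith
  have main : ∀ t₀, HasDerivAt n
      ((⟪deriv N t₀, T₀ t₀⟫_ℝ / Real.sin (θ t₀)) • T₀ t₀) t₀ := by
    intro t₀
    set c : ℝ := ⟪N t₀, h⟫_ℝ with hc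
    set c' : ℝ := ⟪deriv N t₀, h⟫_ℝ with hc'
    set s : ℝ := Real.sin (θ t₀) with hs
    have hsne : s ≠ 0 := (hspos t₀).ne'
    -- derivative of sin ∘ θ
    have hfD : HasDerivAt (fun t => Real.sin (θ t)) (-(2 * c * c') / (2 * s)) t₀ := by
      have hfun : (fun t => Real.sin (θ t)) = fun t => Real.sqrt (1 - ⟪N t, h⟫_ℝ ^ 2) :=
        funext hsin
      rw [hfun]
      have h1 : HasDerivAt (fun t => 1 - ⟪N t, h⟫_ℝ ^ 2) (-(2 * c * c')) t₀ := by
        have h0 := ((hcD t₀).pow 2).const_sub 1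
        refine h0.congr_deriv ?_
        rw [hc, hc']
        norm_num
      have h2 := h1.sqrt (h1c t₀).ne'
      rw [← hsin t₀, ← hs] at h2
      exact h2
    have hgD : HasDerivAt (fun t => (Real.sin (θ t))⁻¹)
        (-(-(2 * c * c') / (2 * s)) / s ^ 2) t₀ := by
      have h0 := hfD.inv hsne
      rw [← hs] at h0
      exact h0
    have hwD : HasDerivAt (fun t => N t - Real.cos (θ t) • h)
        (deriv N t₀ - c' • h) t₀ := by
      have hfun : (fun t => N t - Real.cos (θ t) • h)
          = fun t => N t - ⟪N t, h⟫_ℝ • h := by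
        funext t; rw [hcos t]
      rw [hfun]
      exact (hND t₀).hasDerivAt.sub ((hcD t₀).smul_const h)
    have hnD : HasDerivAt n
        (s⁻¹ • (deriv N t₀ - c' • h)
          + (-(-(2 * c * c') / (2 * s)) / s ^ 2) • (N t₀ - Real.cos (θ t₀) • h)) t₀ := by
      have hfun : n = fun t => (Real.sin (θ t))⁻¹ • (N t - Real.cos (θ t) • h) := funext hn
      rw [hfun]
      have h0 := hgD.smul hwD
      rw [← hs] at h0
      exact h0
    convert hnD using 1
    -- now prove the two derivative expressions are equal
    rw [hT₀ t₀, hcos t₀, ← hs, ← hc]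
    have hX : ⟪deriv N t₀, s⁻¹ • cross3 (N t₀) h⟫_ℝ
        = s⁻¹ * ⟪deriv N t₀, cross3 (N t₀) h⟫_ℝ := real_inner_smul_right _ _ _
    rw [hX, smul_smul]
    -- auxiliary scalar facts
    have hs2' : s ^ 2 = 1 - c ^ 2 := hs2 t₀
    have hA : (N t₀ 0) ^ 2 + (N t₀ 1) ^ 2 + (N t₀ 2) ^ 2 = 1 := by
      have h2 : ⟪N t₀, N t₀⟫_ℝ = 1 := by
        rw [real_inner_self_eq_norm_sq, hNu t₀]; norm_num
      rw [PiLp.inner_apply] at h2; simpa [PiLp.inner_apply, Fin.sum_univ_three, RCLike.inner_apply, sq] using h2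
    have hH : (h 0) ^ 2 + (h 1) ^ 2 + (h 2) ^ 2 = 1 := by
      have h2 : ⟪h, h⟫_ℝ = 1 := by
        rw [real_inner_self_eq_norm_sq, hh]; norm_num
      rw [PiLp.inner_apply] at h2; simpa [PiLp.inner_apply, Fin.sum_univ_three, RCLike.inner_apply, sq] using h2
    have hV : deriv N t₀ 0 * N t₀ 0 + deriv N t₀ 1 * N t₀ 1 + deriv N t₀ 2 * N t₀ 2 = 0 := by
      have h2 := hNN t₀
      simpa [PiLp.inner_apply, Fin.sum_univ_three, RCLike.inner_apply, mul_comm] using h2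
    have hcc : c = N t₀ 0 * h 0 + N t₀ 1 * h 1 + N t₀ 2 * h 2 := by
      rw [hc]; simp [PiLp.inner_apply, Fin.sum_univ_three, RCLike.inner_apply, mul_comm]
    have hcc' : c' = deriv N t₀ 0 * h 0 + deriv N t₀ 1 * h 1 + deriv N t₀ 2 * h 2 := by
      rw [hc']; simp [PiLp.inner_apply, Fin.sum_univ_three, RCLike.inner_apply, mul_comm]
    have hinner : ⟪deriv N t₀, cross3 (N t₀) h⟫_ℝ
        = deriv N t₀ 0 * (N t₀ 1 * h 2 - N t₀ 2 * h 1)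
          + deriv N t₀ 1 * (N t₀ 2 * h 0 - N t₀ 0 * h 2)
          + deriv N t₀ 2 * (N t₀ 0 * h 1 - N t₀ 1 * h 0) := by
      simp [cross3, PiLp.inner_apply, Fin.sum_univ_three, RCLike.inner_apply,
        WithLp.equiv_symm_apply, PiLp.toLp_apply]
      ring
    -- the key algebraic identity (multiplied through by s³)
    have key : ⟪deriv N t₀, cross3 (N t₀) h⟫_ℝ • cross3 (N t₀) h
        = (c * c') • (N t₀ - c • h) + s ^ 2 • (deriv N t₀ - c' • h) := by
      rw [hs2', hinner, hcc, hcc']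
      ext i
      fin_cases i <;>
        simp [cross3, WithLp.equiv_symm_apply, PiLp.toLp_apply, PiLp.smul_apply, PiLp.add_apply,
          PiLp.sub_apply, smul_eq_mul, Matrix.cons_val_zero, Matrix.cons_val_one,
          Matrix.head_cons, Matrix.cons_val_two, Matrix.tail_cons, Fin.isValue]
      · linear_combination
          (deriv N t₀ 0 * (h 0 ^ 2 + h 1 ^ 2 + h 2 ^ 2)
            - (deriv N t₀ 0 * h 0 + deriv N t₀ 1 * h 1 + deriv N t₀ 2 * h 2) * h 0) * hA
          + deriv N t₀ 0 * hH
          + ((N t₀ 0 * h 0 + N t₀ 1 * h 1 + N t₀ 2 * h 2) * h 0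
            - (h 0 ^ 2 + h 1 ^ 2 + h 2 ^ 2) * N t₀ 0) * hV
      · linear_combination
          (deriv N t₀ 1 * (h 0 ^ 2 + h 1 ^ 2 + h 2 ^ 2)
            - (deriv N t₀ 0 * h 0 + deriv N t₀ 1 * h 1 + deriv N t₀ 2 * h 2) * h 1) * hA
          + deriv N t₀ 1 * hH
          + ((N t₀ 0 * h 0 + N t₀ 1 * h 1 + N t₀ 2 * h 2) * h 1
            - (h 0 ^ 2 + h 1 ^ 2 + h 2 ^ 2) * N t₀ 1) * hV
      · linear_combination
          (deriv N t₀ 2 * (h 0 ^ 2 + h 1 ^ 2 + h 2 ^ 2)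
            - (deriv N t₀ 0 * h 0 + deriv N t₀ 1 * h 1 + deriv N t₀ 2 * h 2) * h 2) * hA
          + deriv N t₀ 2 * hH
          + ((N t₀ 0 * h 0 + N t₀ 1 * h 1 + N t₀ 2 * h 2) * h 2
            - (h 0 ^ 2 + h 1 ^ 2 + h 2 ^ 2) * N t₀ 2) * hV
    have e1 : s⁻¹ * ⟪deriv N t₀, cross3 (N t₀) h⟫_ℝ / s * s⁻¹
        = (s ^ 3)⁻¹ * ⟪deriv N t₀, cross3 (N t₀) h⟫_ℝ := by
      have h3 : (s ^ 3)⁻¹ = s⁻¹ * s⁻¹ * s⁻¹ := by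
        rw [pow_succ, pow_two, mul_inv, mul_inv]
      rw [h3]
      ring
    rw [e1, mul_smul, key]
    match_scalars <;> field_simp <;> ring
  exact ⟨fun t => (main t).differentiableAt, fun t₀ => (main t₀).deriv⟩
end

section
/- Under the moving-frame hypotheses, the slice tangent T₀(t) is differentiable and its derivative satisfies T₀'(t₀) = −(⟨N'(t₀), T₀(t₀)⟩ / sin θ(t₀)) · n(t₀) at every t₀ (equivalently, in the paper's notation, D_V T₀ = (II(V, T₀)/sin θ) n). -/
open scoped InnerProductSpace
open Real

lemma cross3_apply (a b : EuclideanSpace ℝ (Fin 3)) (i : Fin 3) :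
    cross3 a b i = ![a 1 * b 2 - a 2 * b 1, a 2 * b 0 - a 0 * b 2, a 0 * b 1 - a 1 * b 0] i := by
  simp [cross3]

/-- `a ↦ a × b` as a continuous linear map. -/
noncomputable def crossR (b : EuclideanSpace ℝ (Fin 3)) :
    EuclideanSpace ℝ (Fin 3) →L[ℝ] EuclideanSpace ℝ (Fin 3) :=
  LinearMap.toContinuousLinearMap
  { toFun := fun a => cross3 a b
    map_add' := by
      intro x y
      ext i
      fin_cases i <;>
        simp [cross3_apply, PiLp.add_apply] <;> ring
    map_smul' := by
      intro c x
      ext i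
      fin_cases i <;>
        simp [cross3_apply, PiLp.smul_apply, smul_eq_mul] <;> ring }

lemma crossR_apply (b a : EuclideanSpace ℝ (Fin 3)) : crossR b a = cross3 a b := rfl

lemma hasDerivAt_cross_const {N : ℝ → EuclideanSpace ℝ (Fin 3)} {N' : EuclideanSpace ℝ (Fin 3)}
    {t₀ : ℝ} (hN : HasDerivAt N N' t₀) (b : EuclideanSpace ℝ (Fin 3)) :
    HasDerivAt (fun t => cross3 (N t) b) (cross3 N' b) t₀ := by
  exact ((crossR b).hasFDerivAt.comp_hasDerivAt t₀ hN)

/-- the slice tangent T₀(t) is differentiable with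
T₀'(t₀) = −(⟨N'(t₀), T₀(t₀)⟩ / sin θ(t₀)) · n(t₀)
(i.e., D_V T₀ = (II(V, T₀)/sin θ) n). -/
theorem deriv_slice_tangent_eq
    (h : EuclideanSpace ℝ (Fin 3)) (hh : ‖h‖ = 1)
    (N : ℝ → EuclideanSpace ℝ (Fin 3)) (hND : Differentiable ℝ N)
    (hNu : ∀ t, ‖N t‖ = 1) (hNh : ∀ t, |⟪N t, h⟫_ℝ| < 1)
    (θ : ℝ → ℝ) (hθ : ∀ t, θ t = Real.arccos ⟪N t, h⟫_ℝ)
    (T₀ : ℝ → EuclideanSpace ℝ (Fin 3))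
    (hT₀ : ∀ t, T₀ t = (Real.sin (θ t))⁻¹ • cross3 (N t) h)
    (Tperp : ℝ → EuclideanSpace ℝ (Fin 3))
    (hTp : ∀ t, Tperp t = cross3 (N t) (T₀ t))
    (n : ℝ → EuclideanSpace ℝ (Fin 3))
    (hn : ∀ t, n t = (Real.sin (θ t))⁻¹ • (N t - Real.cos (θ t) • h)) :
    Differentiable ℝ T₀ ∧
    ∀ t₀, deriv T₀ t₀ = -(⟪deriv N t₀, T₀ t₀⟫_ℝ / Real.sin (θ t₀)) • n t₀ := by
  -- basic abbreviations and facts at an arbitrary point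
  have hT₀fun : T₀ = fun t => (Real.sin (θ t))⁻¹ • cross3 (N t) h := funext hT₀
  have key : ∀ t₀ : ℝ, HasDerivAt T₀
      ((Real.sin (θ t₀))⁻¹ • cross3 (deriv N t₀) h +
        (-((0 - 2 * ⟪N t₀, h⟫_ℝ ^ 1 * ⟪deriv N t₀, h⟫_ℝ) /
            (2 * Real.sqrt (1 - ⟪N t₀, h⟫_ℝ ^ 2))) / Real.sin (θ t₀) ^ 2) •
          cross3 (N t₀) h) t₀ := by
    intro t₀
    set c : ℝ := ⟪N t₀, h⟫_ℝ with hc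
    have habs := abs_lt.mp (hNh t₀)
    have h1c : (0:ℝ) < 1 - c ^ 2 := by nlinarith [habs.1, habs.2]
    have hg : HasDerivAt (fun t => ⟪N t, h⟫_ℝ) ⟪deriv N t₀, h⟫_ℝ t₀ := by
      simpa using (HasDerivAt.inner ℝ (hND t₀).hasDerivAt (hasDerivAt_const t₀ h))
    have hsinθ : (fun t => Real.sin (θ t)) = fun t => Real.sqrt (1 - ⟪N t, h⟫_ℝ ^ 2) := by
      funext t; rw [hθ t, Real.sin_arccos]
    have hf : HasDerivAt (fun t => 1 - ⟪N t, h⟫_ℝ ^ 2)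
        (0 - 2 * c ^ 1 * ⟪deriv N t₀, h⟫_ℝ) t₀ :=
      (hasDerivAt_const t₀ (1:ℝ)).sub (hg.pow 2)
    have hsqrt : HasDerivAt (fun t => Real.sin (θ t))
        ((0 - 2 * c ^ 1 * ⟪deriv N t₀, h⟫_ℝ) / (2 * Real.sqrt (1 - c ^ 2))) t₀ := by
      rw [hsinθ]
      exact hf.sqrt (by positivity)
    have hsne : Real.sin (θ t₀) ≠ 0 := by
      rw [hθ t₀, Real.sin_arccos]
      positivity
    have hinv : HasDerivAt (fun t => (Real.sin (θ t))⁻¹)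
        (-((0 - 2 * c ^ 1 * ⟪deriv N t₀, h⟫_ℝ) / (2 * Real.sqrt (1 - c ^ 2))) /
          Real.sin (θ t₀) ^ 2) t₀ := hsqrt.inv hsne
    have hcross : HasDerivAt (fun t => cross3 (N t) h) (cross3 (deriv N t₀) h) t₀ :=
      hasDerivAt_cross_const (hND t₀).hasDerivAt h
    rw [hT₀fun]
    exact hinv.smul hcross
  constructor
  · exact fun t₀ => (key t₀).differentiableAt
  intro t₀
  rw [(key t₀).deriv]
  -- notation
  set c : ℝ := ⟪N t₀, h⟫_ℝ with hc
  set c' : ℝ := ⟪deriv N t₀, h⟫_ℝ with hc'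
  have habs := abs_lt.mp (hNh t₀)
  have h1c : (0:ℝ) < 1 - c ^ 2 := by nlinarith [habs.1, habs.2]
  have hsθ : Real.sin (θ t₀) = Real.sqrt (1 - c ^ 2) := by rw [hθ t₀, Real.sin_arccos]
  have hcθ : Real.cos (θ t₀) = c := by
    rw [hθ t₀]; exact Real.cos_arccos (by linarith [habs.1]) (le_of_lt habs.2)
  set s : ℝ := Real.sin (θ t₀) with hs
  have hspos : 0 < s := by rw [hsθ]; positivity
  have hsne : s ≠ 0 := ne_of_gt hspos
  have hs2 : s ^ 2 = 1 - c ^ 2 := by rw [hsθ]; exact Real.sq_sqrt (le_of_lt h1c)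
  -- inner product orthogonality: ⟪N, N'⟫ = 0
  have hNN : ⟪N t₀, N t₀⟫_ℝ = 1 := by
    have := hNu t₀
    rw [real_inner_self_eq_norm_mul_norm, this]; ring
  have hNp : ⟪N t₀, deriv N t₀⟫_ℝ = 0 := by
    have h1 : HasDerivAt (fun t => ⟪N t, N t⟫_ℝ)
        (⟪N t₀, deriv N t₀⟫_ℝ + ⟪deriv N t₀, N t₀⟫_ℝ) t₀ :=
      HasDerivAt.inner ℝ (hND t₀).hasDerivAt (hND t₀).hasDerivAt
    have h2 : (fun t => ⟪N t, N t⟫_ℝ) = fun _ => (1:ℝ) := by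
      funext t
      rw [real_inner_self_eq_norm_mul_norm, hNu t]; ring
    rw [h2] at h1
    have h3 := h1.unique (hasDerivAt_const t₀ (1:ℝ))
    have h4 : ⟪N t₀, deriv N t₀⟫_ℝ = ⟪deriv N t₀, N t₀⟫_ℝ := real_inner_comm _ _
    linarith
  -- coordinate versions of the quadratic relations
  have hhip : ⟪h, h⟫_ℝ = 1 := by
    rw [real_inner_self_eq_norm_mul_norm, hh]; ring
  have innerval : ∀ x y : EuclideanSpace ℝ (Fin 3),
      ⟪x, y⟫_ℝ = x 0 * y 0 + x 1 * y 1 + x 2 * y 2 := by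
    intro x y
    simp [PiLp.inner_apply, RCLike.inner_apply, Fin.sum_univ_three, mul_comm]
  have R0 : N t₀ 0 * N t₀ 0 + N t₀ 1 * N t₀ 1 + N t₀ 2 * N t₀ 2 = 1 := by
    rw [← innerval]; exact hNN
  have R1 : h 0 * h 0 + h 1 * h 1 + h 2 * h 2 = 1 := by
    rw [← innerval]; exact hhip
  have R2 : N t₀ 0 * deriv N t₀ 0 + N t₀ 1 * deriv N t₀ 1 + N t₀ 2 * deriv N t₀ 2 = 0 := by
    rw [← innerval]; exact hNp
  have hcc : c = N t₀ 0 * h 0 + N t₀ 1 * h 1 + N t₀ 2 * h 2 := by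
    rw [hc]; exact innerval _ _
  have hcc' : c' = deriv N t₀ 0 * h 0 + deriv N t₀ 1 * h 1 + deriv N t₀ 2 * h 2 := by
    rw [hc']; exact innerval _ _
  -- expand RHS
  rw [hT₀ t₀, hn t₀, hcθ]
  have hq : ⟪deriv N t₀, s⁻¹ • cross3 (N t₀) h⟫_ℝ = s⁻¹ * ⟪deriv N t₀, cross3 (N t₀) h⟫_ℝ :=
    real_inner_smul_right _ _ _
  rw [hq]
  have hqv : ⟪deriv N t₀, cross3 (N t₀) h⟫_ℝ =
      deriv N t₀ 0 * cross3 (N t₀) h 0 + deriv N t₀ 1 * cross3 (N t₀) h 1 +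
        deriv N t₀ 2 * cross3 (N t₀) h 2 := innerval _ _
  rw [hqv]
  ext i
  fin_cases i
  · simp only [PiLp.add_apply, PiLp.sub_apply, PiLp.smul_apply, smul_eq_mul, cross3_apply,
        Matrix.cons_val_zero, Matrix.cons_val_one, Matrix.head_cons, Matrix.cons_val_two,
        Matrix.tail_cons, neg_smul, PiLp.neg_apply]
    simp only [Fin.reduceFinMk, Matrix.cons_val_zero, Matrix.cons_val_one, Matrix.cons_val_two,
      Matrix.head_cons, Matrix.tail_cons]
    rw [← hsθ, ← hs]
    field_simp
    linear_combination (2*((deriv N t₀ 2)*(h 1) - (deriv N t₀ 1)*(h 2))) * R0 + (2*(-(N t₀ 2)^2*(deriv N t₀ 1)*(h 2) + (N t₀ 1)*(N t₀ 2)*(deriv N t₀ 2)*(h 2) - (N t₀ 1)*(N t₀ 2)*(deriv N t₀ 1)*(h 1) + (N t₀ 1)^2*(deriv N t₀ 2)*(h 1) - (N t₀ 0)*(N t₀ 2)*(deriv N t₀ 1)*(h 0) + (N t₀ 0)*(N t₀ 1)*(deriv N t₀ 2)*(h 0))) * R1 + (2*(-(N t₀ 2)*(h 1) + (N t₀ 1)*(h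 2))) * R2 + (2*((deriv N t₀ 1)*(h 2) - (deriv N t₀ 2)*(h 1))) * hs2 + (2*(c' * ((N t₀ 1)*(h 2) - (N t₀ 2)*(h 1)) - (c + ((N t₀ 0)*(h 0) + (N t₀ 1)*(h 1) + (N t₀ 2)*(h 2))) * ((deriv N t₀ 1)*(h 2) - (deriv N t₀ 2)*(h 1)) - ((deriv N t₀ 0)*((N t₀ 1)*(h 2) - (N t₀ 2)*(h 1)) + (deriv N t₀ 1)*((N t₀ 2)*(h 0) - (N t₀ 0)*(h 2)) + (deriv N t₀ 2)*((N t₀ 0)*(h 1) - (N t₀ 1)*(h 0))) * (h 0))) * hcc + (2*((N t₀ 0)*(h 0) + (N t₀ 1)*(h 1) + (N t₀ 2)*(h 2)) * ((N t₀ 1)*(h 2) - (N t₀ 2)*(h 1))) * hcc'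
  · simp only [PiLp.add_apply, PiLp.sub_apply, PiLp.smul_apply, smul_eq_mul, cross3_apply,
        Matrix.cons_val_zero, Matrix.cons_val_one, Matrix.head_cons, Matrix.cons_val_two,
        Matrix.tail_cons, neg_smul, PiLp.neg_apply]
    simp only [Fin.reduceFinMk, Matrix.cons_val_zero, Matrix.cons_val_one, Matrix.cons_val_two,
      Matrix.head_cons, Matrix.tail_cons]
    rw [← hsθ, ← hs]
    field_simp
    linear_combination (2*(-(deriv N t₀ 2)*(h 0)*(h 2)^2 - (deriv N t₀ 2)*(h 0)*(h 1)^2 - (deriv N t₀ 2)*(h 0)^3 + (deriv N t₀ 0)*(h 2))) * R0 + (2*((N t₀ 2)^2*(deriv N t₀ 2)*(h 0) + (N t₀ 2)^2*(deriv N t₀ 0)*(h 2) + (N t₀ 1)*(N t₀ 2)*(deriv N t₀ 0)*(h 1) + (N t₀ 1)^2*(deriv N t₀ 2)*(h 0) - (N t₀ 0)*(N t₀ 2)*(deriv N t₀ 2)*(h 2) + (N t₀ 0)*(N t₀ 2)*(deriv N t₀ 0)*(h 0) - (N t₀ 0)*(N t₀ 1)*(deriv N t₀ 2)*(h 1) -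 (deriv N t₀ 2)*(h 0))) * R1 + (2*((N t₀ 2)*(h 0) - (N t₀ 0)*(h 2))) * R2 + (2*((deriv N t₀ 2)*(h 0) - (deriv N t₀ 0)*(h 2))) * hs2 + (2*(c' * ((N t₀ 2)*(h 0) - (N t₀ 0)*(h 2)) - (c + ((N t₀ 0)*(h 0) + (N t₀ 1)*(h 1) + (N t₀ 2)*(h 2))) * ((deriv N t₀ 2)*(h 0) - (deriv N t₀ 0)*(h 2)) - ((deriv N t₀ 0)*((N t₀ 1)*(h 2) - (N t₀ 2)*(h 1)) + (deriv N t₀ 1)*((N t₀ 2)*(h 0) - (N t₀ 0)*(h 2)) + (deriv N t₀ 2)*((N t₀ 0)*(h 1) - (N t₀ 1)*(h 0))) * (h 1))) * hcc + (2*((N t₀ 0)*(h 0) + (N t₀ 1)*(h 1) + (N t₀ 2)*(h 2)) * ((N t₀ 2)*(h 0) - (N t₀ 0)*(h 2))) * hcc'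
  · simp only [PiLp.add_apply, PiLp.sub_apply, PiLp.smul_apply, smul_eq_mul, cross3_apply,
        Matrix.cons_val_zero, Matrix.cons_val_one, Matrix.head_cons, Matrix.cons_val_two,
        Matrix.tail_cons, neg_smul, PiLp.neg_apply]
    simp only [Fin.reduceFinMk, Matrix.cons_val_zero, Matrix.cons_val_one, Matrix.cons_val_two,
      Matrix.head_cons, Matrix.tail_cons]
    rw [← hsθ, ← hs]
    field_simp
    linear_combination (2*((deriv N t₀ 1)*(h 0)*(h 2)^2 + (deriv N t₀ 1)*(h 0)*(h 1)^2 + (deriv N t₀ 1)*(h 0)^3 - (deriv N t₀ 0)*(h 1))) * R0 + (2*(-(N t₀ 2)^2*(deriv N t₀ 1)*(h 0) - (N t₀ 1)*(N t₀ 2)*(deriv N t₀ 0)*(h 2) - (N t₀ 1)^2*(deriv N t₀ 1)*(h 0) - (N t₀ 1)^2*(deriv N t₀ 0)*(h 1) + (N t₀ 0)*(N t₀ 2)*(deriv N t₀ 1)*(h 2) + (N t₀ 0)*(N t₀ 1)*(deriv N t₀ 1)*(h 1) - (N t₀ 0)*(N t₀ 1)*(deriv N t₀ 0)*(h 0) +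 (deriv N t₀ 1)*(h 0))) * R1 + (2*(-(N t₀ 1)*(h 0) + (N t₀ 0)*(h 1))) * R2 + (2*((deriv N t₀ 0)*(h 1) - (deriv N t₀ 1)*(h 0))) * hs2 + (2*(c' * ((N t₀ 0)*(h 1) - (N t₀ 1)*(h 0)) - (c + ((N t₀ 0)*(h 0) + (N t₀ 1)*(h 1) + (N t₀ 2)*(h 2))) * ((deriv N t₀ 0)*(h 1) - (deriv N t₀ 1)*(h 0)) - ((deriv N t₀ 0)*((N t₀ 1)*(h 2) - (N t₀ 2)*(h 1)) + (deriv N t₀ 1)*((N t₀ 2)*(h 0) - (N t₀ 0)*(h 2)) + (deriv N t₀ 2)*((N t₀ 0)*(h 1) - (N t₀ 1)*(h 0))) * (h 2))) * hcc + (2*((N t₀ 0)*(h 0) + (N t₀ 1)*(h 1) + (N t₀ 2)*(h 2)) * ((N t₀ 0)*(h 1) - (N t₀ 1)*(h 0))) * hcc'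
end

section
/- Under the moving-frame hypotheses, the vector T⊥(t) is differentiable and its derivative satisfies T⊥'(t₀) = −⟨N'(t₀), T⊥(t₀)⟩ · N(t₀) + cot θ(t₀) · ⟨N'(t₀), T₀(t₀)⟩ · T₀(t₀) at every t₀ (equivalently, in the paper's notation, D_V T⊥ = II(V, T⊥) N − cot θ · II(V, T₀) T₀). -/
open scoped InnerProductSpace
open Real

lemma hasDerivAt_cross3 {f g : ℝ → EuclideanSpace ℝ (Fin 3)}
    {f' g' : EuclideanSpace ℝ (Fin 3)} {t : ℝ}
    (hf : HasDerivAt f f' t) (hg : HasDerivAt g g' t) :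
    HasDerivAt (fun s => cross3 (f s) (g s)) (cross3 f' (g t) + cross3 (f t) g') t := by
  have hfi : ∀ i : Fin 3, HasDerivAt (fun s => f s i) (f' i) t := fun i => by
    exact (EuclideanSpace.proj i).hasFDerivAt.comp_hasDerivAt t hf
  have hgi : ∀ i : Fin 3, HasDerivAt (fun s => g s i) (g' i) t := fun i => by
    exact (EuclideanSpace.proj i).hasFDerivAt.comp_hasDerivAt t hg
  have k0 : HasDerivAt (fun s => cross3 (f s) (g s) 0)
      ((cross3 f' (g t) + cross3 (f t) g') 0) t := by
    have e0 : (cross3 f' (g t) + cross3 (f t) g') 0 =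
        f' 1 * g t 2 + f t 1 * g' 2 - (f' 2 * g t 1 + f t 2 * g' 1) := by
      simp [cross3_apply, PiLp.add_apply]; ring
    rw [e0]
    exact ((hfi 1).mul (hgi 2)).sub ((hfi 2).mul (hgi 1))
  have k1 : HasDerivAt (fun s => cross3 (f s) (g s) 1)
      ((cross3 f' (g t) + cross3 (f t) g') 1) t := by
    have e1 : (cross3 f' (g t) + cross3 (f t) g') 1 =
        f' 2 * g t 0 + f t 2 * g' 0 - (f' 0 * g t 2 + f t 0 * g' 2) := by
      simp [cross3_apply, PiLp.add_apply]; ring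
    rw [e1]
    exact ((hfi 2).mul (hgi 0)).sub ((hfi 0).mul (hgi 2))
  have k2 : HasDerivAt (fun s => cross3 (f s) (g s) 2)
      ((cross3 f' (g t) + cross3 (f t) g') 2) t := by
    have e2 : (cross3 f' (g t) + cross3 (f t) g') 2 =
        f' 0 * g t 1 + f t 0 * g' 1 - (f' 1 * g t 0 + f t 1 * g' 0) := by
      simp [cross3_apply, PiLp.add_apply]; ring
    rw [e2]
    exact ((hfi 0).mul (hgi 1)).sub ((hfi 1).mul (hgi 0))
  have hPi : HasDerivAt (fun s => (fun i => cross3 (f s) (g s) i : Fin 3 → ℝ))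
      (fun i => (cross3 f' (g t) + cross3 (f t) g') i) t := by
    apply hasDerivAt_pi.2
    intro i
    fin_cases i
    exacts [k0, k1, k2]
  exact ((EuclideanSpace.equiv (Fin 3) ℝ).symm.toContinuousLinearMap.hasFDerivAt.comp_hasDerivAt
    t hPi : HasDerivAt _ _ t)

lemma cross3_zero_right (a : EuclideanSpace ℝ (Fin 3)) : cross3 a 0 = 0 := by
  ext i; fin_cases i <;> simp [cross3_apply]

lemma cross3_smul_right (r : ℝ) (a b : EuclideanSpace ℝ (Fin 3)) :
    cross3 a (r • b) = r • cross3 a b := by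
  ext i; fin_cases i <;> simp [cross3_apply, PiLp.smul_apply, smul_eq_mul] <;> ring

lemma cross3_smul_left (r : ℝ) (a b : EuclideanSpace ℝ (Fin 3)) :
    cross3 (r • a) b = r • cross3 a b := by
  ext i; fin_cases i <;> simp [cross3_apply, PiLp.smul_apply, smul_eq_mul] <;> ring

lemma cross3_add_right (a b c : EuclideanSpace ℝ (Fin 3)) :
    cross3 a (b + c) = cross3 a b + cross3 a c := by
  ext i; fin_cases i <;> simp [cross3_apply, PiLp.add_apply] <;> ring

lemma cross3_anticomm (a b : EuclideanSpace ℝ (Fin 3)) :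
    cross3 a b = -cross3 b a := by
  ext i; fin_cases i <;> simp [cross3_apply, PiLp.neg_apply] <;> ring

/-- BAC-CAB rule. -/
lemma cross3_cross3 (a b c : EuclideanSpace ℝ (Fin 3)) :
    cross3 a (cross3 b c) = ⟪a, c⟫_ℝ • b - ⟪a, b⟫_ℝ • c := by
  ext i
  fin_cases i <;>
    simp [cross3_apply, PiLp.inner_apply, RCLike.inner_apply, Fin.sum_univ_three,
      PiLp.smul_apply, PiLp.sub_apply, smul_eq_mul] <;> ring

/-- Lagrange identity. -/
lemma inner_cross3_self (a b : EuclideanSpace ℝ (Fin 3)) :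
    ⟪cross3 a b, cross3 a b⟫_ℝ = ⟪a, a⟫_ℝ * ⟪b, b⟫_ℝ - ⟪a, b⟫_ℝ ^ 2 := by
  simp only [PiLp.inner_apply, RCLike.inner_apply, conj_trivial, Fin.sum_univ_three]
  simp [cross3_apply]
  ring

/-- the vector Tperp(t) is differentiable with
Tperp'(t₀) = −⟨N'(t₀), Tperp(t₀)⟩ · N(t₀) + cot θ(t₀) · ⟨N'(t₀), T₀(t₀)⟩ · T₀(t₀)
(i.e., D_V Tperp = II(V, Tperp) N − cot θ · II(V, T₀) T₀). -/
theorem deriv_Tperp_eq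
    (h : EuclideanSpace ℝ (Fin 3)) (hh : ‖h‖ = 1)
    (N : ℝ → EuclideanSpace ℝ (Fin 3)) (hND : Differentiable ℝ N)
    (hNu : ∀ t, ‖N t‖ = 1) (hNh : ∀ t, |⟪N t, h⟫_ℝ| < 1)
    (θ : ℝ → ℝ) (hθ : ∀ t, θ t = Real.arccos ⟪N t, h⟫_ℝ)
    (T₀ : ℝ → EuclideanSpace ℝ (Fin 3))
    (hT₀ : ∀ t, T₀ t = (Real.sin (θ t))⁻¹ • cross3 (N t) h)
    (Tperp : ℝ → EuclideanSpace ℝ (Fin 3))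
    (hTp : ∀ t, Tperp t = cross3 (N t) (T₀ t))
    (n : ℝ → EuclideanSpace ℝ (Fin 3))
    (hn : ∀ t, n t = (Real.sin (θ t))⁻¹ • (N t - Real.cos (θ t) • h)) :
    Differentiable ℝ Tperp ∧
    ∀ t₀, deriv Tperp t₀ =
      -⟪deriv N t₀, Tperp t₀⟫_ℝ • N t₀ +
        ((Real.cos (θ t₀) / Real.sin (θ t₀)) * ⟪deriv N t₀, T₀ t₀⟫_ℝ) • T₀ t₀ := by
  have hNt : ∀ t, HasDerivAt N (deriv N t) t := fun t => (hND t).hasDerivAt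
  -- the inner product with h
  have hc : ∀ t, HasDerivAt (fun s => ⟪N s, h⟫_ℝ) ⟪deriv N t, h⟫_ℝ t := fun t => by
    simpa using (hNt t).inner ℝ (hasDerivAt_const t h)
  -- orthogonality of N' and N
  have horto : ∀ t, ⟪deriv N t, N t⟫_ℝ = 0 := by
    intro t
    have h1 : HasDerivAt (fun s => ⟪N s, N s⟫_ℝ)
        (⟪N t, deriv N t⟫_ℝ + ⟪deriv N t, N t⟫_ℝ) t := (hNt t).inner ℝ (hNt t)
    have h2 : (fun s => ⟪N s, N s⟫_ℝ) = fun _ => (1 : ℝ) := funext fun s => by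
      rw [real_inner_self_eq_norm_sq, hNu s]; norm_num
    rw [h2] at h1
    have h3 := h1.unique (hasDerivAt_const t 1)
    rw [real_inner_comm (N t)] at h3
    rw [real_inner_comm]
    linarith
  -- trigonometry
  have hcos : ∀ t, Real.cos (θ t) = ⟪N t, h⟫_ℝ := fun t => by
    rw [hθ]
    exact Real.cos_arccos (abs_le.1 (le_of_lt (hNh t))).1 (abs_le.1 (le_of_lt (hNh t))).2
  have hpos : ∀ t, 0 < 1 - ⟪N t, h⟫_ℝ ^ 2 := fun t => by
    have h1 : ⟪N t, h⟫_ℝ ^ 2 < 1 := by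
      rw [← sq_abs]
      nlinarith [abs_nonneg ⟪N t, h⟫_ℝ, hNh t]
    linarith
  have hsin : ∀ t, Real.sin (θ t) = √(1 - ⟪N t, h⟫_ℝ ^ 2) := fun t => by
    rw [hθ]; exact Real.sin_arccos _
  have hSpos : ∀ t, 0 < Real.sin (θ t) := fun t => by
    rw [hsin]; exact Real.sqrt_pos.2 (hpos t)
  have hSsq : ∀ t, Real.sin (θ t) ^ 2 = 1 - ⟪N t, h⟫_ℝ ^ 2 := fun t => by
    rw [hsin]; exact Real.sq_sqrt (le_of_lt (hpos t))
  -- derivative of sin θ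
  have hSder : ∀ t, HasDerivAt (fun s => Real.sin (θ s))
      (-(⟪N t, h⟫_ℝ * ⟪deriv N t, h⟫_ℝ) / Real.sin (θ t)) t := by
    intro t
    have h1 : HasDerivAt (fun s => 1 - ⟪N s, h⟫_ℝ ^ 2)
        (-(2 * ⟪N t, h⟫_ℝ * ⟪deriv N t, h⟫_ℝ)) t := by
      have := ((hc t).pow 2).const_sub 1
      refine this.congr_deriv ?_
      ring
    have h2 := (Real.hasDerivAt_sqrt (ne_of_gt (hpos t))).comp t h1
    have h3 : (fun s => Real.sin (θ s)) = fun s => √(1 - ⟪N s, h⟫_ℝ ^ 2) := funext hsin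
    rw [h3]
    refine h2.congr_deriv ?_
    rw [← hsin t]
    have hs0 := ne_of_gt (hSpos t)
    field_simp
  -- derivative of the inverse of sin θ
  have hIder : ∀ t, HasDerivAt (fun s => (Real.sin (θ s))⁻¹)
      (-(-(⟪N t, h⟫_ℝ * ⟪deriv N t, h⟫_ℝ) / Real.sin (θ t)) / Real.sin (θ t) ^ 2) t :=
    fun t => (hSder t).inv (ne_of_gt (hSpos t))
  -- derivative of N × h
  have hXder : ∀ t, HasDerivAt (fun s => cross3 (N s) h) (cross3 (deriv N t) h) t := by
    intro t
    have := hasDerivAt_cross3 (hNt t) (hasDerivAt_const t h)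
    simpa [cross3_zero_right] using this
  -- derivative of T₀
  have hT₀f : T₀ = fun s => (Real.sin (θ s))⁻¹ • cross3 (N s) h := funext hT₀
  have hT₀der : ∀ t, HasDerivAt T₀
      ((Real.sin (θ t))⁻¹ • cross3 (deriv N t) h +
        (-(-(⟪N t, h⟫_ℝ * ⟪deriv N t, h⟫_ℝ) / Real.sin (θ t)) / Real.sin (θ t) ^ 2) •
          cross3 (N t) h) t := by
    intro t
    rw [hT₀f]
    exact (hIder t).smul (hXder t)
  -- derivative of Tperp
  have hTpf : Tperp = fun s => cross3 (N s) (T₀ s) := funext hTp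
  have hTpder : ∀ t, HasDerivAt Tperp
      (cross3 (deriv N t) (T₀ t) +
        cross3 (N t)
          ((Real.sin (θ t))⁻¹ • cross3 (deriv N t) h +
            (-(-(⟪N t, h⟫_ℝ * ⟪deriv N t, h⟫_ℝ) / Real.sin (θ t)) / Real.sin (θ t) ^ 2) •
              cross3 (N t) h)) t := by
    intro t
    rw [hTpf]
    exact hasDerivAt_cross3 (hNt t) (hT₀der t)
  refine ⟨fun t => (hTpder t).differentiableAt, ?_⟩
  intro t₀
  rw [(hTpder t₀).deriv, hTp t₀, hT₀ t₀, hcos t₀]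
  -- abbreviations
  set u := N t₀ with hu_def
  set v := deriv N t₀ with hv_def
  set s := Real.sin (θ t₀) with hs_def
  set c := ⟪u, h⟫_ℝ with hc_def
  set c' := ⟪v, h⟫_ℝ with hc'_def
  have hs0 : s ≠ 0 := ne_of_gt (hSpos t₀)
  have hssq : s ^ 2 = 1 - c ^ 2 := hSsq t₀
  have huu : ⟪u, u⟫_ℝ = 1 := by
    rw [real_inner_self_eq_norm_sq, hNu t₀]; norm_num
  have hhh : ⟪h, h⟫_ℝ = 1 := by
    rw [real_inner_self_eq_norm_sq, hh]; norm_num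
  have hvu : ⟪v, u⟫_ℝ = 0 := horto t₀
  have huv : ⟪u, v⟫_ℝ = 0 := by rw [real_inner_comm]; exact hvu
  set X := cross3 u h with hX_def
  -- key algebraic identities
  have huX : cross3 u X = c • u - h := by
    rw [hX_def, cross3_cross3, huu, one_smul]
  have hvX : cross3 v X = c' • u := by
    rw [hX_def, cross3_cross3, hvu, zero_smul, sub_zero]
  have huvh : cross3 u (cross3 v h) = c • v := by
    rw [cross3_cross3, huv, zero_smul, sub_zero]
  have hXX : ⟪X, X⟫_ℝ = s ^ 2 := by
    rw [hX_def, inner_cross3_self, huu, hhh, hssq]; ring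
  have hinner_vuX : ⟪v, cross3 u X⟫_ℝ = -c' := by
    rw [huX, inner_sub_right, real_inner_smul_right, hvu]; ring
  have hkey : ⟪v, X⟫_ℝ • X = s ^ 2 • v - c' • h + (c * c') • u := by
    have e1 : cross3 X (cross3 v X) = ⟪X, X⟫_ℝ • v - ⟪X, v⟫_ℝ • X := cross3_cross3 X v X
    have e2 : cross3 X (cross3 v X) = c' • (h - c • u) := by
      rw [hvX, cross3_smul_right, cross3_anticomm X u, huX]
      module
    have e3 : ⟪X, v⟫_ℝ = ⟪v, X⟫_ℝ := real_inner_comm v X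
    have e4 : ⟪v, X⟫_ℝ • X = ⟪X, X⟫_ℝ • v - cross3 X (cross3 v X) := by
      rw [e1, e3]; abel
    rw [e4, e2, hXX]
    module
  -- expand everything
  simp only [cross3_smul_right, cross3_add_right, real_inner_smul_right]
  rw [hinner_vuX, huX, hvX, huvh]
  -- replace ⟪v,X⟫ • X
  have expand : (c / s * (s⁻¹ * ⟪v, X⟫_ℝ)) • (s⁻¹ • X) =
      (c / s * (s⁻¹ * s⁻¹)) • (⟪v, X⟫_ℝ • X) := by
    rw [smul_smul, smul_smul]
    congr 1
    ring
  rw [expand, hkey]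
  match_scalars
  · field_simp
  · field_simp
  · field_simp
end

section
/- Let N and h be unit vectors in ℝ³ and θ ∈ (0, π) with ⟨N, h⟩ = cos θ, and let T₀, T⊥, n be the associated frame vectors. Let i be a unit vector and α ∈ (0, π) with ⟨i, h⟩ = cos α; define i⊥ₕ := (h − cos α · i)/sin α and i⊥⊥ := i⊥ₕ × i. Then: (a) i⊥⊥ = (h × i)/sin α; (b) ⟨i⊥ₕ, n⟩ = −cot α · ⟨i, n⟩; (c) ⟨i⊥⊥, n⟩ = ⟨i, T₀⟩/sin α; (d) ⟨i, N⟩ = sin θ · ⟨i, n⟩ + cos θ · ⟨i, h⟩. -/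
open scoped InnerProductSpace
open Real

/-- identities relating the heading frame (i⊥ₕ, i⊥⊥) to the
surface frame (T₀, Tperp, n, N). -/
theorem heading_frame_identities
    (N h : EuclideanSpace ℝ (Fin 3)) (θ : ℝ)
    (hN : ‖N‖ = 1) (hh : ‖h‖ = 1) (hθ : θ ∈ Set.Ioo (0 : ℝ) π)
    (hNh : ⟪N, h⟫_ℝ = Real.cos θ)
    (T₀ Tperp n : EuclideanSpace ℝ (Fin 3))
    (hT₀ : T₀ = (Real.sin θ)⁻¹ • cross3 N h)
    (hTperp : Tperp = cross3 N T₀)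
    (hn : n = (Real.sin θ)⁻¹ • (N - Real.cos θ • h))
    (i : EuclideanSpace ℝ (Fin 3)) (α : ℝ)
    (hi : ‖i‖ = 1) (hα : α ∈ Set.Ioo (0 : ℝ) π)
    (hih : ⟪i, h⟫_ℝ = Real.cos α)
    (iperph iperpperp : EuclideanSpace ℝ (Fin 3))
    (hiperph : iperph = (Real.sin α)⁻¹ • (h - Real.cos α • i))
    (hiperpperp : iperpperp = cross3 iperph i) :
    iperpperp = (Real.sin α)⁻¹ • cross3 h i ∧
    ⟪iperph, n⟫_ℝ = -(Real.cos α / Real.sin α) * ⟪i, n⟫_ℝ ∧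
    ⟪iperpperp, n⟫_ℝ = ⟪i, T₀⟫_ℝ / Real.sin α ∧
    ⟪i, N⟫_ℝ = Real.sin θ * ⟪i, n⟫_ℝ + Real.cos θ * ⟪i, h⟫_ℝ := by
  obtain ⟨hθ1, hθ2⟩ := hθ
  obtain ⟨hα1, hα2⟩ := hα
  have hsθ : Real.sin θ ≠ 0 := ne_of_gt (Real.sin_pos_of_pos_of_lt_pi hθ1 hθ2)
  have hsα : Real.sin α ≠ 0 := ne_of_gt (Real.sin_pos_of_pos_of_lt_pi hα1 hα2)
  have hh2 : h 0 ^ 2 + h 1 ^ 2 + h 2 ^ 2 = 1 := by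
    have := real_inner_self_eq_norm_sq h
    rw [hh] at this
    simp only [PiLp.inner_apply, RCLike.inner_apply, Fin.sum_univ_three, starRingEnd_apply,
      star_trivial] at this
    linear_combination this
  have hNhc : N 0 * h 0 + N 1 * h 1 + N 2 * h 2 = Real.cos θ := by
    have := hNh
    simp [PiLp.inner_apply, RCLike.inner_apply, Fin.sum_univ_three] at this
    linear_combination this
  have hihc : i 0 * h 0 + i 1 * h 1 + i 2 * h 2 = Real.cos α := by
    have := hih
    simp [PiLp.inner_apply, RCLike.inner_apply, Fin.sum_univ_three] at this
    linear_combination this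
  refine ⟨?_, ?_, ?_, ?_⟩
  · ext k
    fin_cases k <;>
      simp [hiperpperp, hiperph, cross3, PiLp.smul_apply, PiLp.sub_apply, smul_eq_mul] <;>
      ring
  · simp only [hiperph, hn, PiLp.inner_apply, RCLike.inner_apply, Fin.sum_univ_three,
      PiLp.smul_apply, PiLp.sub_apply, smul_eq_mul, RCLike.star_def, starRingEnd_apply,
      star_trivial]
    field_simp
    linear_combination hNhc - Real.cos θ * hh2
  · simp only [hiperpperp, hiperph, hn, hT₀, cross3, PiLp.inner_apply, RCLike.inner_apply,
      Fin.sum_univ_three, PiLp.smul_apply, PiLp.sub_apply, smul_eq_mul, RCLike.star_def,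
      starRingEnd_apply, star_trivial, WithLp.equiv_symm_apply, PiLp.toLp_apply, Matrix.cons_val_zero,
      Matrix.cons_val_one, Matrix.head_cons, Matrix.cons_val_two, Matrix.tail_cons]
    field_simp
    ring
  · simp only [hn, PiLp.inner_apply, RCLike.inner_apply, Fin.sum_univ_three,
      PiLp.smul_apply, PiLp.sub_apply, smul_eq_mul, RCLike.star_def, starRingEnd_apply,
      star_trivial]
    field_simp
    ring
end

section
/- Let ρ : ℝ → ℝ be differentiable with ρ(h) > 0 for all h, fix h₀ ∈ ℝ, and define the unit-speed horizontal slice circle c(s) := (ρ(h₀) cos(s/ρ(h₀)), ρ(h₀) sin(s/ρ(h₀)), h₀) and along it the normal curve Nc(s) := −(1 + ρ'(h₀)²)^(−1/2) · (cos(s/ρ(h₀)), sin(s/ρ(h₀)), −ρ'(h₀)) and the meridian unit tangent T⊥(s) := (1 + ρ'(h₀)²)^(−1/2) · (ρ'(h₀) cos(s/ρ(h₀)), ρ'(h₀) sin(s/ρ(h₀)), 1). Then ‖c'(s)‖ = 1 for all s, and for all s: −⟨Nc'(s), c'(s)⟩ = 1/(ρ(h₀) √(1 + ρ'(h₀)²))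 = cos(arctan ρ'(h₀))/ρ(h₀), and ⟨Nc'(s), T⊥(s)⟩ = 0. -/
open scoped InnerProductSpace
open Real

private lemma hasDerivAt_E3 {f g h : ℝ → ℝ} {f' g' h' s : ℝ}
    (hf : HasDerivAt f f' s) (hg : HasDerivAt g g' s) (hh : HasDerivAt h h' s) :
    HasDerivAt (fun t => (WithLp.equiv 2 (Fin 3 → ℝ)).symm ![f t, g t, h t])
      ((WithLp.equiv 2 (Fin 3 → ℝ)).symm ![f', g', h']) s := by
  have H : HasDerivAt (fun t => ![f t, g t, h t]) ![f', g', h'] s := by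
    refine hasDerivAt_pi.2 (fun i => ?_)
    fin_cases i <;> simpa
  exact ((PiLp.continuousLinearEquiv 2 ℝ (fun _ : Fin 3 => ℝ)).symm.toContinuousLinearMap.hasFDerivAt.comp_hasDerivAt s H)

/-- along a horizontal slice of a surface of revolution, the
slice circle c is unit speed, II(T₀,T₀) = −⟨Nc', c'⟩ = cos(arctan ρ')/ρ and
II(T₀,Tperp) = ⟨Nc', Tperp⟩ = 0. -/
theorem surface_of_revolution_slice_curvature
    (ρ : ℝ → ℝ) (hρd : Differentiable ℝ ρ) (hρpos : ∀ h, 0 < ρ h) (h₀ : ℝ)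
    (c : ℝ → EuclideanSpace ℝ (Fin 3))
    (hc : ∀ s, c s = (WithLp.equiv 2 (Fin 3 → ℝ)).symm
      ![ρ h₀ * Real.cos (s / ρ h₀), ρ h₀ * Real.sin (s / ρ h₀), h₀])
    (Nc : ℝ → EuclideanSpace ℝ (Fin 3))
    (hNc : ∀ s, Nc s = -(Real.sqrt (1 + deriv ρ h₀ ^ 2))⁻¹ •
      (WithLp.equiv 2 (Fin 3 → ℝ)).symm
        ![Real.cos (s / ρ h₀), Real.sin (s / ρ h₀), -(deriv ρ h₀)])
    (Tperp : ℝ → EuclideanSpace ℝ (Fin 3))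
    (hTperp : ∀ s, Tperp s = (Real.sqrt (1 + deriv ρ h₀ ^ 2))⁻¹ •
      (WithLp.equiv 2 (Fin 3 → ℝ)).symm
        ![deriv ρ h₀ * Real.cos (s / ρ h₀), deriv ρ h₀ * Real.sin (s / ρ h₀), 1]) :
    (∀ s, ‖deriv c s‖ = 1) ∧
    (∀ s, -⟪deriv Nc s, deriv c s⟫_ℝ = 1 / (ρ h₀ * Real.sqrt (1 + deriv ρ h₀ ^ 2))) ∧
    (∀ s, -⟪deriv Nc s, deriv c s⟫_ℝ = Real.cos (Real.arctan (deriv ρ h₀)) / ρ h₀) ∧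
    (∀ s, ⟪deriv Nc s, Tperp s⟫_ℝ = 0) := by
  set r := ρ h₀ with hr
  set k := deriv ρ h₀ with hk
  have hrpos : 0 < r := hρpos h₀
  have hrne : r ≠ 0 := hrpos.ne'
  have hapos : 0 < Real.sqrt (1 + k ^ 2) := Real.sqrt_pos.2 (by positivity)
  have hane : Real.sqrt (1 + k ^ 2) ≠ 0 := hapos.ne'
  have hasq : Real.sqrt (1 + k ^ 2) ^ 2 = 1 + k ^ 2 :=
    Real.sq_sqrt (by positivity)
  -- derivative of s/r
  have hdiv : ∀ s : ℝ, HasDerivAt (fun t : ℝ => t / r) (1 / r) s := fun s => by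
    simpa using (hasDerivAt_id s).div_const r
  have hcos : ∀ s : ℝ, HasDerivAt (fun t : ℝ => Real.cos (t / r))
      (-Real.sin (s / r) * (1 / r)) s := fun s =>
    (Real.hasDerivAt_cos (s / r)).comp (h₂ := Real.cos) s (hdiv s)
  have hsin : ∀ s : ℝ, HasDerivAt (fun t : ℝ => Real.sin (t / r))
      (Real.cos (s / r) * (1 / r)) s := fun s =>
    (Real.hasDerivAt_sin (s / r)).comp (h₂ := Real.sin) s (hdiv s)
  -- deriv of c
  have hcderiv : ∀ s, deriv c s = (WithLp.equiv 2 (Fin 3 → ℝ)).symm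
      ![-Real.sin (s / r), Real.cos (s / r), 0] := by
    intro s
    have h1 : HasDerivAt (fun t => r * Real.cos (t / r)) (-Real.sin (s / r)) s := by
      have := (hcos s).const_mul r
      refine this.congr_deriv ?_
      rw [mul_comm r, mul_assoc, one_div_mul_cancel hrne, mul_one]
    have h2 : HasDerivAt (fun t => r * Real.sin (t / r)) (Real.cos (s / r)) s := by
      have := (hsin s).const_mul r
      refine this.congr_deriv ?_
      rw [mul_comm r, mul_assoc, one_div_mul_cancel hrne, mul_one]
    have h3 : HasDerivAt (fun _ : ℝ => h₀) 0 s := hasDerivAt_const s h₀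
    have := hasDerivAt_E3 h1 h2 h3
    rw [show c = fun t => (WithLp.equiv 2 (Fin 3 → ℝ)).symm
      ![r * Real.cos (t / r), r * Real.sin (t / r), h₀] from funext hc]
    exact this.deriv
  -- deriv of Nc
  have hNcderiv : ∀ s, deriv Nc s = -(Real.sqrt (1 + k ^ 2))⁻¹ •
      (WithLp.equiv 2 (Fin 3 → ℝ)).symm
        ![-Real.sin (s / r) * (1 / r), Real.cos (s / r) * (1 / r), 0] := by
    intro s
    have h3 : HasDerivAt (fun _ : ℝ => -k) 0 s := hasDerivAt_const s _
    have := (hasDerivAt_E3 (hcos s) (hsin s) h3).const_smul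
      (-(Real.sqrt (1 + k ^ 2))⁻¹)
    rw [show Nc = fun t => -(Real.sqrt (1 + k ^ 2))⁻¹ •
      (WithLp.equiv 2 (Fin 3 → ℝ)).symm
        ![Real.cos (t / r), Real.sin (t / r), -k] from funext hNc]
    exact this.deriv
  refine ⟨fun s => ?_, fun s => ?_, fun s => ?_, fun s => ?_⟩
  · rw [hcderiv s]
    rw [EuclideanSpace.norm_eq]
    simp [Fin.sum_univ_three]
  · rw [hcderiv s, hNcderiv s, PiLp.inner_apply]
    simp only [Fin.sum_univ_three, PiLp.smul_apply, WithLp.equiv_symm_apply, PiLp.toLp_apply,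
      Matrix.cons_val_zero, Matrix.cons_val_one, Matrix.head_cons,
      Matrix.cons_val_two, Matrix.tail_cons, RCLike.inner_apply, conj_trivial,
      smul_eq_mul]
    have h1 : Real.sin (s / r) ^ 2 + Real.cos (s / r) ^ 2 = 1 :=
      Real.sin_sq_add_cos_sq _
    field_simp
    nlinarith [h1]
  · rw [hcderiv s, hNcderiv s, PiLp.inner_apply, Real.cos_arctan]
    simp only [Fin.sum_univ_three, PiLp.smul_apply, WithLp.equiv_symm_apply, PiLp.toLp_apply,
      Matrix.cons_val_zero, Matrix.cons_val_one, Matrix.head_cons,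
      Matrix.cons_val_two, Matrix.tail_cons, RCLike.inner_apply, conj_trivial,
      smul_eq_mul]
    have h1 : Real.sin (s / r) ^ 2 + Real.cos (s / r) ^ 2 = 1 :=
      Real.sin_sq_add_cos_sq _
    field_simp
    linear_combination h1
  · rw [hNcderiv s, hTperp s, PiLp.inner_apply]
    simp only [Fin.sum_univ_three, PiLp.smul_apply, WithLp.equiv_symm_apply, PiLp.toLp_apply,
      Matrix.cons_val_zero, Matrix.cons_val_one, Matrix.head_cons,
      Matrix.cons_val_two, Matrix.tail_cons, RCLike.inner_apply, conj_trivial,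
      smul_eq_mul]
    ring
end
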